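/- In the hose model with tree routing, for a Steiner tree T spanning terminal set U and an edge e of T inducing the partition A_e ∪ B_e of U, the maximum possible traffic across e over all traffic matrices M consistent with the hose constraints (Σ_v M(u,v) ≤ b_out(u) for each u and Σ_u M(u,v) ≤ b_in(v) for each v, all entries nonnegative) equals min{Σ_{u∈A_e} b_out(u), Σ_{v∈B_e} b_in(v)} + min{Σ_{u∈A_e} b_in(u), Σ_{v∈B_e} b_out(v)}. -/

import Mathlib

open Finset

private lemma aux_div_le (a y m : ℝ) (ha : 0 ≤ a) (hy : 0 ≤ y) (hym : y ≤ m) :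
    a * y / m ≤ a := by
  rcases eq_or_lt_of_le (hy.trans hym) with h | h
  · have : y = 0 := le_antisymm (hym.trans h.symm.le) hy
    simp [this, ha]
  · rw [div_le_iff₀ h]
    exact mul_le_mul_of_nonneg_left hym ha

private lemma aux_div_min (x y : ℝ) (hx : 0 ≤ x) (hy : 0 ≤ y) :
    x * y / max x y = min x y := by
  rcases le_total x y with h | h
  · rcases eq_or_lt_of_le hy with h0 | h0
    · have hx0 : x = 0 := le_antisymm (h.trans h0.symm.le) hx
      simp [← h0, hx0]
    · rw [max_eq_right h, min_eq_left h, mul_div_assoc, div_self h0.ne', mul_one]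
  · rcases eq_or_lt_of_le hx with h0 | h0
    · have hy0 : y = 0 := le_antisymm (h.trans h0.symm.le) hy
      simp [← h0, hy0]
    · rw [max_eq_left h, min_eq_right h, mul_comm, mul_div_assoc, div_self h0.ne', mul_one]

theorem stmt_10 (U : Type) [Fintype U] [DecidableEq U]
    (bin bout : U → ℝ) (hbin : ∀ u, 0 ≤ bin u) (hbout : ∀ u, 0 ≤ bout u)
    (Ae : Finset U) :
    IsGreatest
      {x : ℝ | ∃ M : U → U → ℝ,
        (∀ u v, 0 ≤ M u v) ∧
        (∀ u, (∑ v, M u v) ≤ bout u) ∧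
        (∀ v, (∑ u, M u v) ≤ bin v) ∧
        x = (∑ u ∈ Ae, ∑ v ∈ Aeᶜ, M u v) + (∑ u ∈ Aeᶜ, ∑ v ∈ Ae, M u v)}
      (min (∑ u ∈ Ae, bout u) (∑ v ∈ Aeᶜ, bin v) +
       min (∑ u ∈ Ae, bin u) (∑ v ∈ Aeᶜ, bout v)) := by
  set SoA := ∑ u ∈ Ae, bout u with hSoA
  set SiB := ∑ v ∈ Aeᶜ, bin v with hSiB
  set SoB := ∑ v ∈ Aeᶜ, bout v with hSoB
  set SiA := ∑ u ∈ Ae, bin u with hSiA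
  have hSoA0 : 0 ≤ SoA := Finset.sum_nonneg fun u _ => hbout u
  have hSiB0 : 0 ≤ SiB := Finset.sum_nonneg fun u _ => hbin u
  have hSoB0 : 0 ≤ SoB := Finset.sum_nonneg fun u _ => hbout u
  have hSiA0 : 0 ≤ SiA := Finset.sum_nonneg fun u _ => hbin u
  set D1 := max SoA SiB with hD1
  set D2 := max SoB SiA with hD2
  have hD10 : 0 ≤ D1 := le_max_of_le_left hSoA0
  have hD20 : 0 ≤ D2 := le_max_of_le_left hSoB0
  constructor
  · -- membership
    refine ⟨fun u v => if u ∈ Ae then (if v ∈ Ae then 0 else bout u * bin v / D1)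
      else (if v ∈ Ae then bout u * bin v / D2 else 0), ?_, ?_, ?_, ?_⟩
    · intro u v
      dsimp only
      split_ifs <;>
        first
        | exact le_refl 0
        | exact div_nonneg (mul_nonneg (hbout u) (hbin v)) (by assumption)
    · intro u
      dsimp only
      rw [← Finset.sum_add_sum_compl Ae]
      by_cases hu : u ∈ Ae
      · have h1 : ∑ v ∈ Ae, (if u ∈ Ae then (if v ∈ Ae then 0 else bout u * bin v / D1)
            else (if v ∈ Ae then bout u * bin v / D2 else 0)) = 0 :=
          Finset.sum_eq_zero fun v hv => by simp [hu, hv]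
        have h2 : ∑ v ∈ Aeᶜ, (if u ∈ Ae then (if v ∈ Ae then 0 else bout u * bin v / D1)
            else (if v ∈ Ae then bout u * bin v / D2 else 0)) = bout u * SiB / D1 := by
          rw [hSiB, Finset.mul_sum, Finset.sum_div]
          exact Finset.sum_congr rfl fun v hv => by
            simp [hu, (Finset.mem_compl.mp hv)]
        rw [h1, h2, zero_add]
        exact aux_div_le _ _ _ (hbout u) hSiB0 (le_max_right _ _)
      · have h1 : ∑ v ∈ Ae, (if u ∈ Ae then (if v ∈ Ae then 0 else bout u * bin v / D1)
            else (if v ∈ Ae then bout u * bin v / D2 else 0)) = bout u * SiA / D2 := by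
          rw [hSiA, Finset.mul_sum, Finset.sum_div]
          exact Finset.sum_congr rfl fun v hv => by simp [hu, hv]
        have h2 : ∑ v ∈ Aeᶜ, (if u ∈ Ae then (if v ∈ Ae then 0 else bout u * bin v / D1)
            else (if v ∈ Ae then bout u * bin v / D2 else 0)) = 0 :=
          Finset.sum_eq_zero fun v hv => by simp [hu, (Finset.mem_compl.mp hv)]
        rw [h1, h2, add_zero]
        exact aux_div_le _ _ _ (hbout u) hSiA0 (le_max_right _ _)
    · intro v
      dsimp only
      rw [← Finset.sum_add_sum_compl Ae]
      by_cases hv : v ∈ Ae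
      · have h1 : ∑ u ∈ Ae, (if u ∈ Ae then (if v ∈ Ae then 0 else bout u * bin v / D1)
            else (if v ∈ Ae then bout u * bin v / D2 else 0)) = 0 :=
          Finset.sum_eq_zero fun u hu => by simp [hu, hv]
        have h2 : ∑ u ∈ Aeᶜ, (if u ∈ Ae then (if v ∈ Ae then 0 else bout u * bin v / D1)
            else (if v ∈ Ae then bout u * bin v / D2 else 0)) = SoB * bin v / D2 := by
          rw [hSoB, Finset.sum_mul, Finset.sum_div]
          exact Finset.sum_congr rfl fun u hu => by simp [hv, (Finset.mem_compl.mp hu)]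
        rw [h1, h2, zero_add, mul_comm]
        exact aux_div_le _ _ _ (hbin v) hSoB0 (le_max_left _ _)
      · have h1 : ∑ u ∈ Ae, (if u ∈ Ae then (if v ∈ Ae then 0 else bout u * bin v / D1)
            else (if v ∈ Ae then bout u * bin v / D2 else 0)) = SoA * bin v / D1 := by
          rw [hSoA, Finset.sum_mul, Finset.sum_div]
          exact Finset.sum_congr rfl fun u hu => by simp [hu, hv]
        have h2 : ∑ u ∈ Aeᶜ, (if u ∈ Ae then (if v ∈ Ae then 0 else bout u * bin v / D1)
            else (if v ∈ Ae then bout u * bin v / D2 else 0)) = 0 :=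
          Finset.sum_eq_zero fun u hu => by simp [(Finset.mem_compl.mp hu), hv]
        rw [h1, h2, add_zero, mul_comm]
        exact aux_div_le _ _ _ (hbin v) hSoA0 (le_max_left _ _)
    · dsimp only
      have hAB : (∑ u ∈ Ae, ∑ v ∈ Aeᶜ, (if u ∈ Ae then (if v ∈ Ae then 0 else bout u * bin v / D1)
          else (if v ∈ Ae then bout u * bin v / D2 else 0))) = SoA * SiB / D1 := by
        rw [hSoA, hSiB, Finset.sum_mul_sum, Finset.sum_div]
        refine Finset.sum_congr rfl fun u hu => ?_
        rw [Finset.sum_div]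
        exact Finset.sum_congr rfl fun v hv => by simp [hu, (Finset.mem_compl.mp hv)]
      have hBA : (∑ u ∈ Aeᶜ, ∑ v ∈ Ae, (if u ∈ Ae then (if v ∈ Ae then 0 else bout u * bin v / D1)
          else (if v ∈ Ae then bout u * bin v / D2 else 0))) = SoB * SiA / D2 := by
        rw [hSoB, hSiA, Finset.sum_mul_sum, Finset.sum_div]
        refine Finset.sum_congr rfl fun u hu => ?_
        rw [Finset.sum_div]
        exact Finset.sum_congr rfl fun v hv => by simp [(Finset.mem_compl.mp hu), hv]
      rw [hAB, hBA, hD1, hD2, aux_div_min _ _ hSoA0 hSiB0, aux_div_min _ _ hSoB0 hSiA0,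
        min_comm SoB SiA]
  · -- upper bound
    rintro x ⟨M, hM0, hrow, hcol, rfl⟩
    have hAB : (∑ u ∈ Ae, ∑ v ∈ Aeᶜ, M u v) ≤ min SoA SiB := by
      refine le_min ?_ ?_
      · refine le_trans (Finset.sum_le_sum fun u _ => ?_) (Finset.sum_le_sum fun u _ => hrow u)
        exact Finset.sum_le_sum_of_subset_of_nonneg (Finset.subset_univ _)
          fun v _ _ => hM0 u v
      · rw [Finset.sum_comm]
        refine le_trans (Finset.sum_le_sum fun v _ => ?_) (Finset.sum_le_sum fun v _ => hcol v)
        exact Finset.sum_le_sum_of_subset_of_nonneg (Finset.subset_univ _)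
          fun u _ _ => hM0 u v
    have hBA : (∑ u ∈ Aeᶜ, ∑ v ∈ Ae, M u v) ≤ min SiA SoB := by
      refine le_min ?_ ?_
      · rw [Finset.sum_comm]
        refine le_trans (Finset.sum_le_sum fun v _ => ?_) (Finset.sum_le_sum fun v _ => hcol v)
        exact Finset.sum_le_sum_of_subset_of_nonneg (Finset.subset_univ _)
          fun u _ _ => hM0 u v
      · refine le_trans (Finset.sum_le_sum fun u _ => ?_) (Finset.sum_le_sum fun u _ => hrow u)
        exact Finset.sum_le_sum_of_subset_of_nonneg (Finset.subset_univ _)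
          fun v _ _ => hM0 u v
    exact add_le_add hAB hBA
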